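/- A group G is isomorphic to the multiplicative group of some field if and only if there exists a set X with at least two points and an effective semitransitive distributive binary action of G on X. -/

import Mathlib

def IsBinAct {G X : Type*} [Group G] (a : G → X → X → X) : Prop :=
  (∀ g h x y, a (g * h) x y = a g x (a h x y)) ∧ ∀ x y, a 1 x y = y

def IsDistribAct {G X : Type*} [Group G] (a : G → X → X → X) : Prop :=
  ∀ g h x y z, a g x (a h y z) = a h (a g x y) (a g x z)

def IsEffectiveAct {G X : Type*} [Group G] (a : G → X → X → X) : Prop :=
  ∀ g, (∀ x y, a g x y = y) → g = 1

def IsSemitransAct {G X : Type*} [Group G] (a : G → X → X → X) : Prop :=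
  (∀ g x, a g x x = x) ∧ ∀ x y : X, x ≠ y → Set.range (fun g => a g x y) = {x}ᶜ

theorem Equiv.Perm.apply_inv_self {α : Type*} (f : Equiv.Perm α) (x : α) : f (f⁻¹ x) = x :=
  f.apply_symm_apply x

namespace BinActField
set_option linter.unusedSectionVars false

theorem exists_three_avoiding {α : Type*} (p : Fin 5 → α) (hp : Function.Injective p)
    (w v : α) :
    ∃ z₁ z₂ z₃ : α, z₁ ≠ z₂ ∧ z₁ ≠ z₃ ∧ z₂ ≠ z₃ ∧
      z₁ ≠ w ∧ z₁ ≠ v ∧ z₂ ≠ w ∧ z₂ ≠ v ∧ z₃ ≠ w ∧ z₃ ≠ v := by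
  classical
  set T : Finset (Fin 5) := Finset.univ.filter (fun i => p i ≠ w ∧ p i ≠ v) with hT
  have hcard : 3 ≤ T.card := by
    have h1 : (Finset.univ.filter (fun i : Fin 5 => p i = w)).card ≤ 1 := by
      refine Finset.card_le_one.2 ?_
      intro i hi j hj
      simp only [Finset.mem_filter] at hi hj
      exact hp (hi.2.trans hj.2.symm)
    have h2 : (Finset.univ.filter (fun i : Fin 5 => p i = v)).card ≤ 1 := by
      refine Finset.card_le_one.2 ?_
      intro i hi j hj
      simp only [Finset.mem_filter] at hi hj
      exact hp (hi.2.trans hj.2.symm)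
    have h3 : Finset.univ.filter (fun i : Fin 5 => ¬(p i ≠ w ∧ p i ≠ v)) ⊆
        (Finset.univ.filter (fun i : Fin 5 => p i = w)) ∪
          (Finset.univ.filter (fun i : Fin 5 => p i = v)) := by
      intro i hi
      simp only [Finset.mem_filter, Finset.mem_union, Finset.mem_univ, true_and] at hi ⊢
      push_neg at hi
      by_cases hw : p i = w
      · exact Or.inl hw
      · exact Or.inr (hi hw)
    have h4 : T.card +
        (Finset.univ.filter (fun i : Fin 5 => ¬(p i ≠ w ∧ p i ≠ v))).card = 5 := by
      rw [hT]
      rw [Finset.card_filter_add_card_filter_not]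
      simp
    have h5 : (Finset.univ.filter (fun i : Fin 5 => ¬(p i ≠ w ∧ p i ≠ v))).card ≤ 2 := by
      refine le_trans (Finset.card_le_card h3) (le_trans (Finset.card_union_le _ _) ?_)
      omega
    have h6 : (Finset.univ : Finset (Fin 5)).card = 5 := by simp
    omega
  obtain ⟨i₁, hi₁⟩ := Finset.card_pos.1 (by omega : 0 < T.card)
  have hc2 : 0 < (T.erase i₁).card := by
    rw [Finset.card_erase_of_mem hi₁]; omega
  obtain ⟨i₂, hi₂⟩ := Finset.card_pos.1 hc2
  have hc3 : 0 < ((T.erase i₁).erase i₂).card := by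
    rw [Finset.card_erase_of_mem hi₂, Finset.card_erase_of_mem hi₁]; omega
  obtain ⟨i₃, hi₃⟩ := Finset.card_pos.1 hc3
  have hm₂ := Finset.mem_of_mem_erase hi₂
  have hm₃ := Finset.mem_of_mem_erase (Finset.mem_of_mem_erase hi₃)
  have hne21 : i₂ ≠ i₁ := Finset.ne_of_mem_erase hi₂
  have hne32 : i₃ ≠ i₂ := Finset.ne_of_mem_erase hi₃
  have hne31 : i₃ ≠ i₁ := Finset.ne_of_mem_erase (Finset.mem_of_mem_erase hi₃)
  have hp₁ : p i₁ ≠ w ∧ p i₁ ≠ v := by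
    have := hi₁; rw [hT] at this; simpa using this
  have hp₂ : p i₂ ≠ w ∧ p i₂ ≠ v := by
    have := hm₂; rw [hT] at this; simpa using this
  have hp₃ : p i₃ ≠ w ∧ p i₃ ≠ v := by
    have := hm₃; rw [hT] at this; simpa using this
  exact ⟨p i₁, p i₂, p i₃, fun h => hne21 (hp h).symm, fun h => hne31 (hp h).symm,
    fun h => hne32 (hp h).symm, hp₁.1, hp₁.2, hp₂.1, hp₂.2, hp₃.1, hp₃.2⟩

variable {G X : Type*} [Group G] {a : G → X → X → X}

section Basics

variable (hB : IsBinAct a) (hE : IsEffectiveAct a) (hD : IsDistribAct a)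
  (hS : IsSemitransAct a)

include hB

/-- cancel: `a g x` and `a g⁻¹ x` are inverse. -/
theorem a_cancel (g : G) (x y : X) : a g x (a g⁻¹ x y) = y := by
  rw [← hB.1, mul_inv_cancel, hB.2]

theorem a_cancel' (g : G) (x y : X) : a g⁻¹ x (a g x y) = y := by
  rw [← hB.1, inv_mul_cancel, hB.2]

theorem a_inj (g : G) (x : X) : Function.Injective (a g x) := by
  intro y z h
  have := congrArg (a g⁻¹ x) h
  rwa [a_cancel' hB, a_cancel' hB] at this

omit hB in
/-- existence part of semitransitivity -/
theorem a_exists (hS : IsSemitransAct a) {x y z : X} (hxy : x ≠ y) (hzx : z ≠ x) :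
    ∃ g, a g x y = z := by
  have h := hS.2 x y hxy
  have : z ∈ ({x}ᶜ : Set X) := by simpa using hzx
  rw [← h] at this
  exact this

omit hB in
theorem a_ne (hS : IsSemitransAct a) {x y : X} (g : G) (hxy : x ≠ y) : a g x y ≠ x := by
  have h := hS.2 x y hxy
  have : a g x y ∈ Set.range (fun g => a g x y) := ⟨g, rfl⟩
  rw [h] at this
  simpa using this

include hE hD hS in
/-- Sharpness: a nonidentity element fixes no point with a different center. -/
theorem sharp {g : G} {x y : X} (hxy : x ≠ y) (h : a g x y = y) : g = 1 := by
  have stepA : ∀ z, a g x z = z := by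
    intro z
    by_cases hz : z = y
    · subst hz; exact h
    · obtain ⟨k, hk⟩ := a_exists hS (Ne.symm hxy) hz
      calc a g x z = a g x (a k y x) := by rw [hk]
        _ = a k (a g x y) (a g x x) := hD g k x y x
        _ = a k y x := by rw [h, hS.1]
        _ = z := hk
  refine hE g ?_
  intro w z
  by_cases hwx : w = x
  · subst hwx; exact stepA z
  by_cases hv : ∃ v, v ≠ w ∧ v ≠ x
  · obtain ⟨v, hvw, hvx⟩ := hv
    obtain ⟨k, hk⟩ := a_exists hS hvw (Ne.symm hvx)
    have key : a k v (a g w z) = a k v z := by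
      calc a k v (a g w z) = a g (a k v w) (a k v z) := hD k g v w z
        _ = a g x (a k v z) := by rw [hk]
        _ = a k v z := stepA _
    exact a_inj hB k v key
  · push_neg at hv
    -- X = {w, x}
    by_cases hzw : z = w
    · subst hzw; exact hS.1 g z
    have hzx := hv z hzw
    rw [hzx]
    have h1 : a g w x ≠ w := a_ne hS g hwx
    exact hv _ h1

include hE hD hS in
/-- injectivity of the orbit map -/
theorem orbit_inj {x y : X} (hxy : x ≠ y) {g h : G}
    (hgh : a g x y = a h x y) : g = h := by
  have : a (h⁻¹ * g) x y = y := by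
    rw [hB.1, hgh, a_cancel' hB]
  have := sharp hB hE hD hS hxy this
  rwa [inv_mul_eq_one, eq_comm] at this

end Basics

section Main

variable (hB : IsBinAct a) (hE : IsEffectiveAct a) (hD : IsDistribAct a)
  (hS : IsSemitransAct a) [Nontrivial X]

include hB hE hD hS

/-- G is abelian. -/
theorem comm_G (g h : G) : g * h = h * g := by
  obtain ⟨o, e, hoe⟩ := exists_pair_ne X
  refine orbit_inj hB hE hD hS hoe ?_
  calc a (g * h) o e = a g o (a h o e) := hB.1 g h o e
    _ = a h (a g o o) (a g o e) := hD g h o o e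
    _ = a h o (a g o e) := by rw [hS.1]
    _ = a (h * g) o e := (hB.1 h g o e).symm

/-- Lemma B: for g ≠ 1 the map `u ↦ a g u p` is injective. -/
theorem centerMap_inj {g : G} (hg : g ≠ 1) (p : X) {u v : X}
    (huv : a g u p = a g v p) : u = v := by
  by_cases hup : u = p
  · subst hup
    rw [hS.1] at huv
    by_contra hvu
    exact hg (sharp hB hE hD hS (fun h => hvu h.symm) huv.symm)
  · by_cases hvp : v = p
    · subst hvp
      rw [hS.1] at huv
      exact absurd (sharp hB hE hD hS hup huv) hg
    · obtain ⟨q, hq⟩ := exists_ne p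
      obtain ⟨h, hh⟩ := a_exists hS (Ne.symm hq) hup
      obtain ⟨k, hk⟩ := a_exists hS (Ne.symm hq) hvp
      -- key identity : a g (a h p q) p = a h p (a g q p)
      have key : ∀ m : G, a g (a m p q) p = a m p (a g q p) := by
        intro m
        calc a g (a m p q) p = a g (a m p q) (a m p p) := by rw [hS.1]
          _ = a m p (a g q p) := (hD m g p q p).symm
      have hs : a g q p ≠ p := by
        intro h0
        exact hg (sharp hB hE hD hS hq h0)
      have : a h p (a g q p) = a k p (a g q p) := by
        rw [← key, ← key, hh, hk, huv]
      have := orbit_inj hB hE hD hS (Ne.symm hs) this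
      rw [← hh, ← hk, this]

/-- Lemma B: for g ≠ 1 the map `u ↦ a g u p` is surjective. -/
theorem centerMap_surj {g : G} (hg : g ≠ 1) (p t : X) : ∃ u, a g u p = t := by
  by_cases htp : t = p
  · exact ⟨p, by rw [hS.1, htp]⟩
  · obtain ⟨q, hq⟩ := exists_ne p
    have hs : a g q p ≠ p := fun h0 => hg (sharp hB hE hD hS hq h0)
    obtain ⟨h, hh⟩ := a_exists hS (Ne.symm hs) htp
    refine ⟨a h p q, ?_⟩
    calc a g (a h p q) p = a g (a h p q) (a h p p) := by rw [hS.1]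
      _ = a h p (a g q p) := (hD h g p q p).symm
      _ = t := hh

/-- `a g c` as a permutation. -/
def aP (hB : IsBinAct a) (g : G) (c : X) : Equiv.Perm X :=
  ⟨a g c, a g⁻¹ c, fun y => a_cancel' hB g c y, fun y => a_cancel hB g c y⟩

omit hE hD hS [Nontrivial X]

@[simp] theorem aP_apply (g : G) (c : X) (x : X) : aP hB g c x = a g c x := rfl

@[simp] theorem aP_symm_apply (g : G) (c : X) (x : X) : (aP hB g c).symm x = a g⁻¹ c x := rfl

theorem aP_mul_same (g h : G) (c : X) : aP hB g c * aP hB h c = aP hB (g * h) c := by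
  ext x; simp [Equiv.Perm.mul_apply, ← hB.1]

theorem aP_inv (g : G) (c : X) : (aP hB g c)⁻¹ = aP hB g⁻¹ c := by
  ext x; rfl

theorem aP_one (c : X) : aP hB 1 c = 1 := by
  ext x; simp [hB.2]

omit hB in
/-- Equivariant (special) permutations. -/
def Spec (a : G → X → X → X) (f : Equiv.Perm X) : Prop :=
  ∀ g p z, f (a g p z) = a g (f p) (f z)

omit hB in
theorem Spec.one : Spec a (1 : Equiv.Perm X) := fun _ _ _ => rfl

omit hB in
theorem Spec.mul {f₁ f₂ : Equiv.Perm X} (h₁ : Spec a f₁) (h₂ : Spec a f₂) :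
    Spec a (f₁ * f₂) := by
  intro g p z
  simp only [Equiv.Perm.mul_apply, h₂ g p z]
  exact h₁ g _ _

omit hB in
theorem Spec.inv {f : Equiv.Perm X} (h : Spec a f) : Spec a f⁻¹ := by
  intro g p z
  apply f.injective
  rw [Equiv.Perm.apply_inv_self, h]
  simp

include hD in
theorem spec_aP (g : G) (c : X) : Spec a (aP hB g c) := by
  intro k p z
  exact hD g k c p z

end Main

section Main2

variable (hB : IsBinAct a) (hE : IsEffectiveAct a) (hD : IsDistribAct a)
  (hS : IsSemitransAct a) [Nontrivial X]

include hB hE hD hS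

/-- A special permutation with a fixed point is of the form `a l p`. -/
theorem spec_fix {f : Equiv.Perm X} (hf : Spec a f) {p : X} (hp : f p = p) :
    ∃ l, ∀ z, f z = a l p z := by
  obtain ⟨q, hq⟩ := exists_ne p
  have htq : f q ≠ p := by
    intro h
    exact hq (f.injective (h.trans hp.symm))
  obtain ⟨l, hl⟩ := a_exists hS (Ne.symm hq) htq
  refine ⟨l, fun z => ?_⟩
  by_cases hz : z = p
  · subst hz; rw [hp, hS.1]
  · obtain ⟨k, hk⟩ := a_exists hS (Ne.symm hq) hz
    calc f z = f (a k p q) := by rw [hk]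
      _ = a k (f p) (f q) := hf k p q
      _ = a k p (a l p q) := by rw [hp, hl]
      _ = a (k * l) p q := (hB.1 k l p q).symm
      _ = a (l * k) p q := by rw [comm_G hB hE hD hS]
      _ = a l p (a k p q) := hB.1 l k p q
      _ = a l p z := by rw [hk]

/-- A special permutation with two fixed points is the identity. -/
theorem spec_two_fix {f : Equiv.Perm X} (hf : Spec a f) {p q : X} (hpq : p ≠ q)
    (hp : f p = p) (hq : f q = q) : f = 1 := by
  obtain ⟨l, hl⟩ := spec_fix hB hE hD hS hf hp
  have : a l p q = q := by rw [← hl, hq]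
  have hl1 : l = 1 := sharp hB hE hD hS hpq this
  ext z
  rw [hl, hl1, hB.2, Equiv.Perm.coe_one, id]

/-- Special permutations act transitively on pairs of distinct points. -/
theorem two_trans (H3 : ∀ p q : X, ∃ c, c ≠ p ∧ c ≠ q) {o e x y : X}
    (hoe : o ≠ e) (hxy : x ≠ y) :
    ∃ f : Equiv.Perm X, Spec a f ∧ f o = x ∧ f e = y := by
  by_cases hx : x = o
  · have hy : y ≠ o := by rw [← hx]; exact Ne.symm hxy
    obtain ⟨l, hl⟩ := a_exists hS hoe hy
    exact ⟨aP hB l o, spec_aP hB hD l o, by simp [hS.1, hx.symm], hl⟩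
  · obtain ⟨c, hco, hcx⟩ := H3 o x
    obtain ⟨h, hh⟩ := a_exists hS hco (Ne.symm hcx)
    have hr : a h c e ≠ x := by
      rw [← hh]
      exact fun h0 => hoe (a_inj hB h c h0).symm
    obtain ⟨l, hl⟩ := a_exists hS (Ne.symm hr) (Ne.symm hxy)
    refine ⟨aP hB l x * aP hB h c,
      Spec.mul (spec_aP hB hD l x) (spec_aP hB hD h c), ?_, ?_⟩
    · simp only [Equiv.Perm.mul_apply, aP_apply, hh, hS.1]
    · simp only [Equiv.Perm.mul_apply, aP_apply, hl]

end Main2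

section Star

variable (hB : IsBinAct a) (hE : IsEffectiveAct a) (hD : IsDistribAct a)
  (hS : IsSemitransAct a) [Nontrivial X]
  (H3 : ∀ p q : X, ∃ c, c ≠ p ∧ c ≠ q) (o e : X) (hoe : o ≠ e)

include hB hE hD hS hoe

theorem age_ne_e {g : G} (hg : g ≠ 1) : a g o e ≠ e := by
  intro h
  exact hg (sharp hB hE hD hS hoe h)

theorem star_aux (g : G) : ∃ k : G, g ≠ 1 → a k e o = a g o e := by
  by_cases hg : g = 1
  · exact ⟨1, fun h => absurd hg h⟩
  · obtain ⟨k, hk⟩ := a_exists hS (Ne.symm hoe) (age_ne_e hB hE hD hS o e hoe hg)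
    exact ⟨k, fun _ => hk⟩

/-- The `1 - g` operation. -/
noncomputable def star (g : G) : G :=
  Classical.choose (star_aux hB hE hD hS o e hoe g)

theorem star_spec {g : G} (hg : g ≠ 1) : a (star hB hE hD hS o e hoe g) e o = a g o e :=
  Classical.choose_spec (star_aux hB hE hD hS o e hoe g) hg

theorem star_ne_one {g : G} (hg : g ≠ 1) : star hB hE hD hS o e hoe g ≠ 1 := by
  intro h
  have := star_spec hB hE hD hS o e hoe hg
  rw [h, hB.2] at this
  exact a_ne hS g hoe this.symm

include H3 in
theorem P1 {g : G} (hg : g ≠ 1) {x y : X} (hxy : x ≠ y) :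
    a g x y = a (star hB hE hD hS o e hoe g) y x := by
  obtain ⟨f, hf, hfo, hfe⟩ := two_trans hB hE hD hS H3 hoe hxy
  calc a g x y = a g (f o) (f e) := by rw [hfo, hfe]
    _ = f (a g o e) := (hf g o e).symm
    _ = f (a (star hB hE hD hS o e hoe g) e o) := by
        rw [star_spec hB hE hD hS o e hoe hg]
    _ = a (star hB hE hD hS o e hoe g) (f e) (f o) := hf _ e o
    _ = a (star hB hE hD hS o e hoe g) y x := by rw [hfo, hfe]

theorem star_inj {g h : G} (hg : g ≠ 1) (hh : h ≠ 1)
    (hst : star hB hE hD hS o e hoe g = star hB hE hD hS o e hoe h) : g = h := by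
  have h1 := star_spec hB hE hD hS o e hoe hg
  have h2 := star_spec hB hE hD hS o e hoe hh
  rw [hst] at h1
  exact orbit_inj hB hE hD hS hoe (h1.symm.trans h2)

include H3 in
/-- Two maps of different slopes intersect. -/
theorem INT {g h : G} (hgh : g ≠ h) (c d : X) : ∃ z, a g c z = a h d z := by
  by_cases hg1 : g = 1
  · subst hg1
    exact ⟨d, by rw [hB.2, hS.1]⟩
  by_cases hh1 : h = 1
  · subst hh1
    exact ⟨c, by rw [hB.2, hS.1]⟩
  by_cases hcd : c = d
  · subst hcd
    exact ⟨c, by rw [hS.1, hS.1]⟩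
  set sg := star hB hE hD hS o e hoe g with hsg
  set sh := star hB hE hD hS o e hoe h with hsh
  have hk : sh⁻¹ * sg ≠ 1 := by
    intro h0
    rw [inv_mul_eq_one] at h0
    exact hgh (star_inj hB hE hD hS o e hoe hh1 hg1 h0).symm
  obtain ⟨z, hz⟩ := centerMap_surj hB hE hD hS hk c d
  have hzc : z ≠ c := by
    intro h0
    rw [h0, hS.1] at hz
    exact hcd hz
  have hzd : z ≠ d := by
    intro h0
    rw [h0] at hz
    exact a_ne hS _ (Ne.symm hcd) hz
  refine ⟨z, ?_⟩
  have key : a sg z c = a sh z d := by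
    calc a sg z c = a (sh * (sh⁻¹ * sg)) z c := by rw [mul_inv_cancel_left]
      _ = a sh z (a (sh⁻¹ * sg) z c) := hB.1 _ _ z c
      _ = a sh z d := by rw [hz]
  rw [P1 hB hE hD hS H3 o e hoe hg1 (Ne.symm hzc),
    P1 hB hE hD hS H3 o e hoe hh1 (Ne.symm hzd)]
  exact key

omit hB hE hD hS hoe in
/-- "fixed point or identity" predicate -/
def FOI (f : Equiv.Perm X) : Prop := ∀ z, f z = z → f = 1

include H3 in
/-- collapse: a two-fold product with slope-product ≠ 1 is a single map. -/
theorem collapse {g h : G} (hgh : g * h ≠ 1) (c d : X) :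
    ∃ j w, ∀ z, a g c (a h d z) = a j w z := by
  have hg'h : g⁻¹ ≠ h := by
    intro h0
    rw [← h0, mul_inv_cancel] at hgh
    exact hgh rfl
  obtain ⟨z, hz⟩ := INT hB hE hD hS H3 o e hoe hg'h c d
  have hfix : a g c (a h d z) = z := by
    rw [← hz, a_cancel hB]
  have hspec : Spec a (aP hB g c * aP hB h d) :=
    Spec.mul (spec_aP hB hD g c) (spec_aP hB hD h d)
  obtain ⟨j, hj⟩ := spec_fix hB hE hD hS hspec
    (show (aP hB g c * aP hB h d) z = z from hfix)
  exact ⟨j, z, fun x => hj x⟩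

include H3 in
/-- structure of fixed-point-free special permutations -/
theorem fpf_struct {s : Equiv.Perm X} (hs : Spec a s) (hfpf : ∀ z, s z ≠ z)
    (w z : X) (hzw : z ≠ w) (hsz : s z ≠ w) :
    ∃ κ, κ ≠ 1 ∧ (∀ x, s x = a κ⁻¹ w (a κ z x)) ∧ a κ w (s z) = z := by
  obtain ⟨κ, hκ⟩ := a_exists hS (Ne.symm hsz) hzw
  have hκ1 : κ ≠ 1 := by
    intro h0
    rw [h0, hB.2] at hκ
    exact hfpf z hκ
  have hσspec : Spec a (aP hB κ w * s) := Spec.mul (spec_aP hB hD κ w) hs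
  obtain ⟨j, hj⟩ := spec_fix hB hE hD hS hσspec
    (show (aP hB κ w * s) z = z from hκ)
  have hjκ : j = κ := by
    by_contra hne
    obtain ⟨u, hu⟩ := INT hB hE hD hS H3 o e hoe hne z w
    have : s u = u := by
      have h1 : a κ w (s u) = a j z u := hj u
      have : s u = a κ⁻¹ w (a j z u) := by
        rw [← h1, a_cancel' hB]
      rw [this, hu, a_cancel' hB]
    exact hfpf u this
  refine ⟨κ, hκ1, fun x => ?_, hκ⟩
  have h1 : a κ w (s x) = a j z x := hj x
  rw [hjκ] at h1
  rw [← h1, a_cancel' hB]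

/-- the slope κ is determined injectively by the point z -/
theorem fpf_kappa_inj {s : Equiv.Perm X} (hs : Spec a s) (hfpf : ∀ z, s z ≠ z)
    (w : X) {z₁ z₂ : X} {κ : G}
    (h₁ : a κ w (s z₁) = z₁) (h₂ : a κ w (s z₂) = z₂) (hz : z₁ ≠ z₂) : False := by
  have hspec : Spec a (aP hB κ w * s) := Spec.mul (spec_aP hB hD κ w) hs
  have hone : (aP hB κ w * s) = 1 := spec_two_fix hB hE hD hS hspec hz h₁ h₂
  have h3 : ∀ x, a κ w (s x) = x := by
    intro x
    have := congrArg (fun f : Equiv.Perm X => f x) hone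
    simpa using this
  have : s w = w := by
    apply a_inj hB κ w
    rw [h3 w, hS.1]
  exact hfpf w this

omit hB hE hD hS hoe in
theorem pick3 {k₁ k₂ k₃ b₁ b₂ : G} (h12 : k₁ ≠ k₂) (h13 : k₁ ≠ k₃) (h23 : k₂ ≠ k₃) :
    (k₁ ≠ b₁ ∧ k₁ ≠ b₂) ∨ (k₂ ≠ b₁ ∧ k₂ ≠ b₂) ∨ (k₃ ≠ b₁ ∧ k₃ ≠ b₂) := by
  by_cases ha : k₁ = b₁
  · by_cases hb : k₂ = b₂
    · refine Or.inr (Or.inr ⟨?_, ?_⟩)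
      · intro h; exact h13 (ha.trans h.symm)
      · intro h; exact h23 (hb.trans h.symm)
    · by_cases hc : k₂ = b₁
      · exact absurd (ha.trans hc.symm) h12
      · exact Or.inr (Or.inl ⟨hc, hb⟩)
  · by_cases hb : k₁ = b₂
    · by_cases hc : k₂ = b₁
      · refine Or.inr (Or.inr ⟨?_, ?_⟩)
        · intro h; exact h23 (hc.trans h.symm)
        · intro h; exact h13 (hb.trans h.symm)
      · by_cases hd : k₂ = b₂
        · exact absurd (hb.trans hd.symm) h12
        · exact Or.inr (Or.inl ⟨hc, hd⟩)
    · exact Or.inl ⟨ha, hb⟩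

include H3 in
/-- composing two fixed-point-free-or-identity special permutations again has the property -/
theorem FOI_mul
    (HP : ∀ w v : X, ∃ z₁ z₂ z₃ : X, z₁ ≠ z₂ ∧ z₁ ≠ z₃ ∧ z₂ ≠ z₃ ∧
      z₁ ≠ w ∧ z₁ ≠ v ∧ z₂ ≠ w ∧ z₂ ≠ v ∧ z₃ ≠ w ∧ z₃ ≠ v)
    {s t : Equiv.Perm X} (hs : Spec a s) (ht : Spec a t) (hfs : FOI s) (hft : FOI t) :
    FOI (s * t) := by
  intro w hw
  by_cases hsid : ∃ z, s z = z
  · obtain ⟨z, hz⟩ := hsid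
    have h1 : s = 1 := hfs z hz
    rw [h1, one_mul] at hw ⊢
    exact hft w hw
  by_cases htid : ∃ z, t z = z
  · obtain ⟨z, hz⟩ := htid
    have h1 : t = 1 := hft z hz
    rw [h1, mul_one] at hw ⊢
    exact hfs w hw
  push_neg at hsid htid
  obtain ⟨l, hl⟩ := spec_fix hB hE hD hS (Spec.mul hs ht) hw
  by_cases hl1 : l = 1
  · ext x
    have := hl x
    rw [hl1, hB.2] at this
    simpa using this
  exfalso
  have hs' : Spec a s⁻¹ := Spec.inv hs
  have hfpf' : ∀ z, s⁻¹ z ≠ z := by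
    intro z h0
    have := congrArg s h0
    rw [Equiv.Perm.apply_inv_self] at this
    exact hsid z this.symm
  -- the main computation, for a suitable z₀ κ
  have main : ∀ z₀ κ, κ ≠ 1 → κ ≠ l → κ ≠ l⁻¹ →
      (∀ x, s⁻¹ x = a κ⁻¹ w (a κ z₀ x)) → False := by
    intro z₀ κ hκ1 hκl hκl' hsx
    have ht1 : ∀ x, t x = a κ⁻¹ w (a κ z₀ (a l w x)) := by
      intro x
      have h0 : t x = s⁻¹ ((s * t) x) := by
        simp [Equiv.Perm.mul_apply]
      rw [h0, hl x, hsx]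
    have hκlne : κ * l ≠ 1 := by
      intro h0
      exact hκl' (eq_inv_of_mul_eq_one_left h0)
    obtain ⟨j, y₀, hj⟩ := collapse hB hE hD hS H3 o e hoe hκlne z₀ w
    have ht2 : ∀ x, t x = a κ⁻¹ w (a j y₀ x) := fun x => by rw [ht1 x, ← hj]
    have hjκ : j = κ := by
      by_contra hne
      obtain ⟨u, hu⟩ := INT hB hE hD hS H3 o e hoe hne y₀ w
      exact htid u (by rw [ht2 u, hu, a_cancel' hB])
    rw [hjκ] at ht2
    have htinv : ∀ x, t⁻¹ x = a κ⁻¹ y₀ (a κ w x) := by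
      intro x
      apply t.injective
      rw [Equiv.Perm.apply_inv_self, ht2, a_cancel hB, a_cancel' hB]
    have hs1 : ∀ x, s x = a l w (a κ⁻¹ y₀ (a κ w x)) := by
      intro x
      have h0 : s x = (s * t) (t⁻¹ x) := by
        simp [Equiv.Perm.mul_apply]
      rw [h0, hl, htinv]
    have hlκne : l * κ⁻¹ ≠ 1 := by
      intro h0
      exact hκl (inv_injective (inv_eq_of_mul_eq_one_right h0).symm)
    obtain ⟨j₂, y₂, hj₂⟩ := collapse hB hE hD hS H3 o e hoe hlκne w y₀
    have hs2 : ∀ x, s x = a j₂ y₂ (a κ w x) := fun x => by rw [hs1 x, ← hj₂]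
    have hj₂κ : j₂ = κ⁻¹ := by
      by_contra hne
      have hne' : κ ≠ j₂⁻¹ := by
        intro h0
        exact hne (by rw [h0, inv_inv])
      obtain ⟨u, hu⟩ := INT hB hE hD hS H3 o e hoe hne' w y₂
      exact hsid u (by rw [hs2 u, hu, a_cancel hB])
    rw [hj₂κ] at hs2
    have hfin : ∀ x, a l w x = a κ⁻¹ y₂ (a κ y₀ x) := by
      intro x
      have h1 : s (t x) = a κ⁻¹ y₂ (a κ y₀ x) := by
        rw [ht2 x, hs2, a_cancel hB]
      rw [← h1]
      exact (hl x).symm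
    have hy : y₀ = y₂ := by
      have h1 := hfin w
      rw [hS.1] at h1
      have h2 : a κ y₂ w = a κ y₀ w := by
        conv_lhs => rw [h1]
        rw [a_cancel hB]
      exact (centerMap_inj hB hE hD hS hκ1 w h2).symm
    obtain ⟨q, hq⟩ := exists_ne w
    have hfix : a l w q = q := by
      rw [hfin q, ← hy, a_cancel' hB]
    exact hl1 (sharp hB hE hD hS (Ne.symm hq) hfix)
  -- choose the right z₀
  obtain ⟨z₁, z₂, z₃, h12, h13, h23, h1w, h1v, h2w, h2v, h3w, h3v⟩ := HP w (s w)
  have hside : ∀ z : X, z ≠ s w → s⁻¹ z ≠ w := by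
    intro z hz h0
    have := congrArg s h0
    rw [Equiv.Perm.apply_inv_self] at this
    exact hz this
  obtain ⟨κ₁, hκ₁1, hf₁, hx₁⟩ :=
    fpf_struct hB hE hD hS H3 o e hoe hs' hfpf' w z₁ h1w (hside z₁ h1v)
  obtain ⟨κ₂, hκ₂1, hf₂, hx₂⟩ :=
    fpf_struct hB hE hD hS H3 o e hoe hs' hfpf' w z₂ h2w (hside z₂ h2v)
  obtain ⟨κ₃, hκ₃1, hf₃, hx₃⟩ :=
    fpf_struct hB hE hD hS H3 o e hoe hs' hfpf' w z₃ h3w (hside z₃ h3v)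
  have hk12 : κ₁ ≠ κ₂ := by
    intro h0
    exact fpf_kappa_inj hB hE hD hS o e hoe hs' hfpf' w hx₁
      (show a κ₁ w (s⁻¹ z₂) = z₂ by rw [h0]; exact hx₂) h12
  have hk13 : κ₁ ≠ κ₃ := by
    intro h0
    exact fpf_kappa_inj hB hE hD hS o e hoe hs' hfpf' w hx₁
      (show a κ₁ w (s⁻¹ z₃) = z₃ by rw [h0]; exact hx₃) h13
  have hk23 : κ₂ ≠ κ₃ := by
    intro h0
    exact fpf_kappa_inj hB hE hD hS o e hoe hs' hfpf' w hx₂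
      (show a κ₂ w (s⁻¹ z₃) = z₃ by rw [h0]; exact hx₃) h23
  rcases pick3 hk12 hk13 hk23 (b₁ := l) (b₂ := l⁻¹) with ⟨hbl, hbl'⟩ | ⟨hbl, hbl'⟩ | ⟨hbl, hbl'⟩
  · exact main z₁ κ₁ hκ₁1 hbl hbl' hf₁
  · exact main z₂ κ₂ hκ₂1 hbl hbl' hf₂
  · exact main z₃ κ₃ hκ₃1 hbl hbl' hf₃

omit hB hE hD hS hoe in
theorem FOI_one : FOI (1 : Equiv.Perm X) := fun _ _ => rfl

omit hB hE hD hS hoe in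
theorem FOI_inv {f : Equiv.Perm X} (hf : FOI f) : FOI f⁻¹ := by
  intro z hz
  have : f z = z := by
    conv_lhs => rw [← hz]
    exact f.apply_symm_apply z
  rw [hf z this, inv_one]

omit hB hE hD hS hoe in
theorem FOI_conj (u : Equiv.Perm X) {f : Equiv.Perm X} (hf : FOI f) :
    FOI (u * f * u⁻¹) := by
  intro z hz
  have h1 : f (u⁻¹ z) = u⁻¹ z := by
    have := congrArg (fun y => u⁻¹ y) hz
    simpa [Equiv.Perm.mul_apply] using this
  rw [hf _ h1, mul_one, mul_inv_cancel]

/-- existence of a translation taking `o` to `x` -/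
theorem trans_exists {b : G} (hb : b ≠ 1) (x : X) :
    ∃ f : Equiv.Perm X, Spec a f ∧ FOI f ∧ f o = x := by
  obtain ⟨p, hp⟩ := centerMap_surj hB hE hD hS hb o (a b o x)
  refine ⟨aP hB b⁻¹ o * aP hB b p,
    Spec.mul (spec_aP hB hD _ _) (spec_aP hB hD _ _), ?_, ?_⟩
  · intro z hz
    simp only [Equiv.Perm.mul_apply, aP_apply] at hz
    have h2 : a b p z = a b o z := by
      have := congrArg (a b o) hz
      rwa [a_cancel hB] at this
    have hpo : p = o := centerMap_inj hB hE hD hS hb z h2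
    rw [hpo, aP_mul_same, inv_mul_cancel, aP_one]
  · simp only [Equiv.Perm.mul_apply, aP_apply]
    rw [hp, a_cancel' hB]

include H3 in
/-- uniqueness of translations -/
theorem trans_unique
    (HP : ∀ w v : X, ∃ z₁ z₂ z₃ : X, z₁ ≠ z₂ ∧ z₁ ≠ z₃ ∧ z₂ ≠ z₃ ∧
      z₁ ≠ w ∧ z₁ ≠ v ∧ z₂ ≠ w ∧ z₂ ≠ v ∧ z₃ ≠ w ∧ z₃ ≠ v)
    {s t : Equiv.Perm X} (hs : Spec a s) (ht : Spec a t) (hfs : FOI s) (hft : FOI t)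
    (h : s o = t o) : s = t := by
  have h1 : FOI (s⁻¹ * t) :=
    FOI_mul hB hE hD hS H3 o e hoe HP (Spec.inv hs) ht (FOI_inv hfs) hft
  have h2 : (s⁻¹ * t) o = o := by
    simp only [Equiv.Perm.mul_apply, ← h]
    exact s.symm_apply_apply o
  have := h1 o h2
  rw [inv_mul_eq_one] at this
  exact this

end Star

/-- helper for injectivity of a 5-tuple -/
theorem inj5 {α : Type*} {x0 x1 x2 x3 x4 : α}
    (h01 : x0 ≠ x1) (h02 : x0 ≠ x2) (h03 : x0 ≠ x3) (h04 : x0 ≠ x4)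
    (h12 : x1 ≠ x2) (h13 : x1 ≠ x3) (h14 : x1 ≠ x4)
    (h23 : x2 ≠ x3) (h24 : x2 ≠ x4) (h34 : x3 ≠ x4) :
    Function.Injective ![x0, x1, x2, x3, x4] := by
  intro i j h
  fin_cases i <;> fin_cases j <;> simp_all

theorem reverse_big {G X : Type u} [Group G] {a : G → X → X → X}
    (hB : IsBinAct a) (hE : IsEffectiveAct a) (hD : IsDistribAct a)
    (hS : IsSemitransAct a) [Nontrivial X]
    (hP3 : ∃ g₁ g₂ g₃ : G, g₁ ≠ 1 ∧ g₂ ≠ 1 ∧ g₃ ≠ 1 ∧ g₁ ≠ g₂ ∧ g₁ ≠ g₃ ∧ g₂ ≠ g₃) :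
    ∃ (F : Type u) (_ : Field F), Nonempty (G ≃* Fˣ) := by
  classical
  obtain ⟨o, e, hoe⟩ := exists_pair_ne X
  obtain ⟨g₁, g₂, g₃, hg₁, hg₂, hg₃, h12, h13, h23⟩ := hP3
  have φ_inj : ∀ {g h : G}, a g o e = a h o e → g = h :=
    fun h => orbit_inj hB hE hD hS hoe h
  have φ_ne : ∀ g : G, a g o e ≠ o := fun g => a_ne hS g hoe
  have he1 : e = a 1 o e := (hB.2 o e).symm
  have φ_ne_e : ∀ {g : G}, g ≠ 1 → a g o e ≠ e := by
    intro g hg h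
    exact hg (φ_inj (h.trans he1))
  -- five distinct points
  have hp5 : Function.Injective ![o, e, a g₁ o e, a g₂ o e, a g₃ o e] := by
    refine inj5 hoe (Ne.symm (φ_ne g₁)) (Ne.symm (φ_ne g₂)) (Ne.symm (φ_ne g₃))
      (Ne.symm (φ_ne_e hg₁)) (Ne.symm (φ_ne_e hg₂)) (Ne.symm (φ_ne_e hg₃))
      (fun h => h12 (φ_inj h)) (fun h => h13 (φ_inj h)) (fun h => h23 (φ_inj h))
  have HP : ∀ w v : X, ∃ z₁ z₂ z₃ : X, z₁ ≠ z₂ ∧ z₁ ≠ z₃ ∧ z₂ ≠ z₃ ∧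
      z₁ ≠ w ∧ z₁ ≠ v ∧ z₂ ≠ w ∧ z₂ ≠ v ∧ z₃ ≠ w ∧ z₃ ≠ v :=
    fun w v => exists_three_avoiding _ hp5 w v
  have H3 : ∀ q r : X, ∃ c, c ≠ q ∧ c ≠ r := by
    intro q r
    obtain ⟨z₁, _, _, _, _, _, hq, hr, _, _, _, _⟩ := HP q r
    exact ⟨z₁, hq, hr⟩
  -- translations
  have t_ex : ∀ x, ∃ f : Equiv.Perm X, Spec a f ∧ FOI f ∧ f o = x :=
    fun x => trans_exists hB hE hD hS o e hoe hg₁ x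
  choose tr tr_spec tr_foi tr_o using t_ex
  have uniq : ∀ {s : Equiv.Perm X}, Spec a s → FOI s → ∀ x, s o = x → s = tr x := by
    intro s hs hf x hx
    exact trans_unique hB hE hD hS H3 o e hoe HP hs (tr_spec x) hf (tr_foi x)
      (by rw [hx, tr_o])
  -- index of a nonzero element
  have ind_ex : ∀ x : X, ∃ g : G, x ≠ o → a g o e = x := by
    intro x
    by_cases hx : x = o
    · exact ⟨1, fun h => absurd hx h⟩
    · obtain ⟨g, hg⟩ := a_exists hS hoe hx
      exact ⟨g, fun _ => hg⟩
  choose ind ind_spec using ind_ex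
  have ind_φ : ∀ g : G, ind (a g o e) = g :=
    fun g => φ_inj (ind_spec _ (φ_ne g))
  -- operations
  letI : Zero X := ⟨o⟩
  letI : One X := ⟨e⟩
  letI : Add X := ⟨fun x y => tr x y⟩
  letI : Mul X := ⟨fun x y => if x = o then o else a (ind x) o y⟩
  letI : Neg X := ⟨fun x => (tr x)⁻¹ o⟩
  letI : Inv X := ⟨fun x => if x = o then o else a (ind x)⁻¹ o e⟩
  -- lemmas about the operations
  have tr_mul : ∀ x y : X, tr (tr x y) = tr x * tr y := by
    intro x y
    symm
    apply uniq (Spec.mul (tr_spec x) (tr_spec y))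
      (FOI_mul hB hE hD hS H3 o e hoe HP (tr_spec x) (tr_spec y) (tr_foi x) (tr_foi y))
    simp only [Equiv.Perm.mul_apply, tr_o]
  have tr_zero : tr o = 1 := by
    symm
    exact uniq Spec.one FOI_one o rfl
  have add_assoc' : ∀ x y z : X, x + y + z = x + (y + z) := by
    intro x y z
    show tr (tr x y) z = tr x (tr y z)
    rw [tr_mul x y]
    rfl
  have zero_add' : ∀ x : X, 0 + x = x := by
    intro x
    show tr o x = x
    rw [tr_zero]
    rfl
  have neg_add' : ∀ x : X, -x + x = 0 := by
    intro x
    show tr ((tr x)⁻¹ o) x = o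
    have h1 : tr ((tr x)⁻¹ o) = (tr x)⁻¹ := by
      symm
      exact uniq (Spec.inv (tr_spec x)) (FOI_inv (tr_foi x)) _ rfl
    rw [h1]
    apply (tr x).injective
    rw [Equiv.Perm.apply_inv_self, tr_o]
  have mul_o : ∀ y : X, (0 : X) * y = 0 := by
    intro y
    show (if o = o then o else _) = o
    rw [if_pos rfl]
  have mul_ne : ∀ {x : X} (y : X), x ≠ o → x * y = a (ind x) o y := by
    intro x y hx
    show (if x = o then o else a (ind x) o y) = a (ind x) o y
    rw [if_neg hx]
  have mul_val : ∀ {x y : X}, x ≠ o → y ≠ o → x * y = a (ind x * ind y) o e := by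
    intro x y hx hy
    rw [mul_ne y hx, ← ind_spec y hy, ← hB.1, ind_spec y hy]
  have mul_ne_o : ∀ {x y : X}, x ≠ o → y ≠ o → x * y ≠ o := by
    intro x y hx hy
    rw [mul_val hx hy]
    exact φ_ne _
  have ind_mul : ∀ {x y : X}, x ≠ o → y ≠ o → ind (x * y) = ind x * ind y := by
    intro x y hx hy
    apply φ_inj
    rw [ind_spec _ (mul_ne_o hx hy), mul_val hx hy]
  have mul_x_o : ∀ x : X, x * (0 : X) = 0 := by
    intro x
    show (if x = o then o else a (ind x) o o) = o
    by_cases hx : x = o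
    · rw [if_pos hx]
    · rw [if_neg hx]
      exact hS.1 _ o
  have mul_comm' : ∀ x y : X, x * y = y * x := by
    intro x y
    by_cases hx : x = o
    · rw [show x = (0 : X) from hx, mul_o, mul_x_o]
    · by_cases hy : y = o
      · rw [show y = (0 : X) from hy, mul_o, mul_x_o]
      · rw [mul_val hx hy, mul_val hy hx, comm_G hB hE hD hS]
  have mul_assoc' : ∀ x y z : X, x * y * z = x * (y * z) := by
    intro x y z
    by_cases hx : x = o
    · rw [show x = (0 : X) from hx, mul_o, mul_o, mul_o]
    · by_cases hy : y = o
      · rw [show y = (0 : X) from hy, mul_x_o, mul_o, mul_x_o]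
      · rw [mul_ne z (mul_ne_o hx hy), ind_mul hx hy, hB.1, ← mul_ne _ hy, ← mul_ne _ hx]
  have one_ne : (e : X) ≠ o := Ne.symm hoe
  have ind_e : ind e = 1 := by
    apply φ_inj
    rw [ind_spec _ one_ne, hB.2]
  have one_mul' : ∀ x : X, 1 * x = x := by
    intro x
    show (e : X) * x = x
    rw [mul_ne x one_ne, ind_e, hB.2]
  have mul_inv' : ∀ x : X, x ≠ 0 → x * x⁻¹ = 1 := by
    intro x hx
    have hx' : x ≠ o := hx
    show x * (if x = o then o else a (ind x)⁻¹ o e) = e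
    rw [if_neg hx', mul_ne _ hx', ← hB.1, mul_inv_cancel, hB.2]
  have inv_zero' : (0 : X)⁻¹ = 0 := by
    show (if o = o then o else _) = o
    rw [if_pos rfl]
  have ldistrib : ∀ x y z : X, x * (y + z) = x * y + x * z := by
    intro x y z
    by_cases hx : x = o
    · rw [show x = (0 : X) from hx, mul_o, mul_o, mul_o]
      exact (zero_add' 0).symm
    · have conj : tr (a (ind x) o y) = aP hB (ind x) o * tr y * (aP hB (ind x) o)⁻¹ := by
        symm
        apply uniq
        · exact Spec.mul (Spec.mul (spec_aP hB hD _ _) (tr_spec y))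
            (Spec.inv (spec_aP hB hD _ _))
        · exact FOI_conj _ (tr_foi y)
        · simp only [Equiv.Perm.mul_apply, aP_inv, aP_apply, hS.1, tr_o]
      rw [mul_ne (y + z) hx, mul_ne y hx, mul_ne z hx]
      show a (ind x) o (tr y z) = tr (a (ind x) o y) (a (ind x) o z)
      rw [conj]
      simp only [Equiv.Perm.mul_apply, aP_inv, aP_apply, a_cancel' hB]
  letI fieldX : Field X := Field.ofMinimalAxioms X add_assoc' zero_add' neg_add'
    mul_assoc' mul_comm' one_mul' mul_inv' inv_zero' ldistrib ⟨o, e, hoe⟩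
  -- the multiplicative isomorphism
  have hmulφ : ∀ g h : G, (a g o e) * (a h o e) = a (g * h) o e := by
    intro g h
    rw [mul_ne _ (φ_ne g), ind_φ, hB.1]
  have toU_val : ∀ g : G, (a g o e) * (a g⁻¹ o e) = 1 := by
    intro g
    rw [hmulφ, mul_inv_cancel]
    exact hB.2 o e
  have toU_val' : ∀ g : G, (a g⁻¹ o e) * (a g o e) = 1 := by
    intro g
    rw [hmulφ, inv_mul_cancel]
    exact hB.2 o e
  refine ⟨X, fieldX, ⟨?_⟩⟩
  refine
    { toFun := fun g => ⟨a g o e, a g⁻¹ o e, toU_val g, toU_val' g⟩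
      invFun := fun u => ind (u : X)
      left_inv := fun g => ind_φ g
      right_inv := ?_
      map_mul' := ?_ }
  · intro u
    have hu : (u : X) ≠ o := by
      intro h0
      have h1 := u.mul_inv
      rw [h0] at h1
      have h2 : (o : X) * ((u⁻¹ : Xˣ) : X) = o := mul_o _
      rw [h2] at h1
      exact hoe h1
    apply Units.ext
    show a (ind (u : X)) o e = (u : X)
    exact ind_spec _ hu
  · intro g h
    apply Units.ext
    show a (g * h) o e = (a g o e) * (a h o e)
    rw [hmulφ]



theorem small_group_field {G : Type u} [Group G]
    (h : ¬ ∃ g₁ g₂ g₃ : G, g₁ ≠ 1 ∧ g₂ ≠ 1 ∧ g₃ ≠ 1 ∧ g₁ ≠ g₂ ∧ g₁ ≠ g₃ ∧ g₂ ≠ g₃) :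
    ∃ (F : Type u) (_ : Field F), Nonempty (G ≃* Fˣ) := by
  classical
  by_cases h1 : ∀ g : G, g = 1
  · -- trivial group, use 𝔽₂
    refine ⟨ULift (ZMod 2), inferInstance, ⟨?_⟩⟩
    haveI : Subsingleton (ZMod 2)ˣ := by
      haveI : Fact (Nat.Prime 2) := ⟨by norm_num⟩
      rw [← Fintype.card_le_one_iff_subsingleton, ZMod.card_units 2]
    haveI : Subsingleton (ULift (ZMod 2))ˣ :=
      (Units.mapEquiv (MulEquiv.ulift : ULift (ZMod 2) ≃* ZMod 2)).toEquiv.subsingleton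
    exact
      { toFun := fun _ => 1
        invFun := fun _ => 1
        left_inv := fun g => (h1 g).symm
        right_inv := fun u => Subsingleton.elim _ _
        map_mul' := fun _ _ => (one_mul 1).symm }
  · push_neg at h1
    obtain ⟨τ, hτ⟩ := h1
    by_cases h2 : ∀ g : G, g = 1 ∨ g = τ
    · -- order two, use 𝔽₃
      have e2 : G ≃ Fin 2 :=
        { toFun := fun g => if g = 1 then 0 else 1
          invFun := ![1, τ]
          left_inv := by
            intro g
            rcases h2 g with hg | hg
            · subst hg; simp
            · subst hg; simp [hτ]
          right_inv := by
            intro i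
            fin_cases i
            · simp
            · simp [hτ] }
      have hcard : Nat.card G = 2 := by
        rw [Nat.card_congr e2, Nat.card_eq_fintype_card, Fintype.card_fin]
      have hcardF : Nat.card (ULift.{u} (ZMod 3))ˣ = 2 := by
        rw [Nat.card_units, Nat.card_congr (Equiv.ulift), Nat.card_eq_fintype_card,
          ZMod.card]
      haveI : Fact (Nat.Prime 2) := ⟨by norm_num⟩
      exact ⟨ULift (ZMod 3), inferInstance, ⟨mulEquivOfPrimeCardEq hcard hcardF⟩⟩
    · -- order three, use 𝔽₄
      push_neg at h2
      obtain ⟨σ, hσ1, hστ⟩ := h2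
      have htrich : ∀ g : G, g = 1 ∨ g = τ ∨ g = σ := by
        intro g
        by_contra hg
        push_neg at hg
        obtain ⟨hg1, hgτ, hgσ⟩ := hg
        exact h ⟨g, τ, σ, hg1, hτ, hσ1, hgτ, hgσ, fun hh => hστ hh.symm⟩
      have e3 : G ≃ Fin 3 :=
        { toFun := fun g => if g = 1 then 0 else if g = τ then 1 else 2
          invFun := ![1, τ, σ]
          left_inv := by
            intro g
            rcases htrich g with hg | hg | hg
            · subst hg; simp
            · subst hg; simp [hτ]
            · subst hg; simp [hσ1, hστ]
          right_inv := by
            intro i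
            fin_cases i
            · simp
            · simp [hτ]
            · simp [hσ1, hστ] }
      have hcard : Nat.card G = 3 := by
        rw [Nat.card_congr e3, Nat.card_eq_fintype_card, Fintype.card_fin]
      have hcardF : Nat.card (ULift.{u} (GaloisField 2 2))ˣ = 3 := by
        rw [Nat.card_units, Nat.card_congr (Equiv.ulift),
          GaloisField.card 2 2 (by norm_num)]
        norm_num
      haveI : Fact (Nat.Prime 3) := ⟨by norm_num⟩
      exact ⟨ULift (GaloisField 2 2), inferInstance, ⟨mulEquivOfPrimeCardEq hcard hcardF⟩⟩


section Forward


theorem forward_dir {G : Type u} [Group G] {F : Type u} [Field F] (i : G ≃* Fˣ) :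
    ∃ (X : Type u) (a : G → X → X → X),
      Nontrivial X ∧ IsBinAct a ∧ IsEffectiveAct a ∧
      IsDistribAct a ∧ IsSemitransAct a := by
  refine ⟨F, fun g x y => x + (i g : F) * (y - x), inferInstance, ⟨?_, ?_⟩, ?_, ?_, ?_, ?_⟩
  · intro g h x y
    simp only [map_mul, Units.val_mul, add_sub_cancel_left]
    ring
  · intro x y; simp
  · intro g hg
    have h0 := hg 0 1
    simp only [sub_zero, mul_one, zero_add] at h0
    have : i g = 1 := Units.ext h0
    have := i.injective (this.trans (map_one i).symm)
    simpa using this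
  · intro g h x y z
    simp only [add_sub_cancel_left]
    ring_nf
  · intro g x; simp
  · intro x y hxy
    ext z
    simp only [Set.mem_range, Set.mem_compl_iff, Set.mem_singleton_iff]
    constructor
    · rintro ⟨g, rfl⟩
      intro h
      have : (i g : F) * (y - x) = 0 := by linear_combination h
      rcases mul_eq_zero.1 this with h' | h'
      · exact (i g).ne_zero h'
      · exact hxy (by linear_combination -h')
    · intro hz
      have hyx : y - x ≠ 0 := sub_ne_zero.2 (Ne.symm hxy)
      have hzx : z - x ≠ 0 := sub_ne_zero.2 hz
      refine ⟨i.symm (Units.mk0 ((z - x) / (y - x)) (div_ne_zero hzx hyx)), ?_⟩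
      simp only [MulEquiv.apply_symm_apply, Units.val_mk0]
      field_simp
      ring

end Forward

end BinActField

/-- A group `G` is the multiplicative group of some field iff it admits an effective
semitransitive distributive binary action on a set with at least two points. -/
theorem mul_group_of_field_iff_semitransitive_distributive_action
    (G : Type u) [Group G] :
    (∃ (F : Type u) (_ : Field F), Nonempty (G ≃* Fˣ)) ↔
      ∃ (X : Type u) (a : G → X → X → X),
        Nontrivial X ∧ IsBinAct a ∧ IsEffectiveAct a ∧
        IsDistribAct a ∧ IsSemitransAct a := by
  constructor
  · rintro ⟨F, hF, ⟨i⟩⟩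
    letI := hF
    exact BinActField.forward_dir i
  · rintro ⟨X, a, hNT, hB, hE, hD, hS⟩
    haveI := hNT
    by_cases hP3 : ∃ g₁ g₂ g₃ : G, g₁ ≠ 1 ∧ g₂ ≠ 1 ∧ g₃ ≠ 1 ∧ g₁ ≠ g₂ ∧ g₁ ≠ g₃ ∧ g₂ ≠ g₃
    · exact BinActField.reverse_big hB hE hD hS hP3
    · exact BinActField.small_group_field hP3
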